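/- Under the hypotheses of the fixed-steplength theorem (μ-strong convexity, L-smoothness, ‖e(x)‖ ≤ ε̄_g, step α ≤ 1/L), the iterates satisfy the R-linear bound φ(x_k) − φ⋆ ≤ (1 − αμ)^k (φ(x_0) − φ⋆ − ε̄_g²/(2μ)) + ε̄_g²/(2μ) for all k ≥ 0. -/

import Mathlib

open Set RealInnerProductSpace

lemma aux_taylor_upper {n : ℕ} (φ : EuclideanSpace ℝ (Fin n) → ℝ) (hφ : ContDiff ℝ 2 φ) (C : ℝ)
    (h : ∀ z v : EuclideanSpace ℝ (Fin n), fderiv ℝ (fderiv ℝ φ) z v v ≤ C * ‖v‖ ^ 2)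
    (x y : EuclideanSpace ℝ (Fin n)) :
    φ y ≤ φ x + fderiv ℝ φ x (y - x) + C / 2 * ‖y - x‖ ^ 2 := by
  set v := y - x with hv
  set c : ℝ → EuclideanSpace ℝ (Fin n) := fun t => x + t • v with hcdef
  have hφd : Differentiable ℝ φ := hφ.differentiable two_ne_zero
  have hφ' : ContDiff ℝ 1 (fderiv ℝ φ) := hφ.fderiv_right (by norm_num)
  have hc : ∀ t : ℝ, HasDerivAt c v t := by
    intro t
    have : HasDerivAt (fun t : ℝ => t • v) ((1:ℝ) • v) t := (hasDerivAt_id t).smul_const v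
    simpa [hcdef] using this.const_add x
  have hψ : ∀ t, HasDerivAt (fun t => φ (c t)) (fderiv ℝ φ (c t) v) t := fun t =>
    (hφd (c t)).hasFDerivAt.comp_hasDerivAt t (hc t)
  have hψ1 : ∀ t, HasDerivAt (fun t => fderiv ℝ φ (c t) v)
      (fderiv ℝ (fderiv ℝ φ) (c t) v v) t := by
    intro t
    have h1 : HasDerivAt (fun t => fderiv ℝ φ (c t)) (fderiv ℝ (fderiv ℝ φ) (c t) v) t :=
      ((hφ'.differentiable one_ne_zero) (c t)).hasFDerivAt.comp_hasDerivAt t (hc t)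
    simpa using h1.clm_apply (hasDerivAt_const t v)
  have hc0 : c 0 = x := by simp [hcdef]
  set G : ℝ → ℝ := fun t => fderiv ℝ φ x v + C * ‖v‖ ^ 2 * t - fderiv ℝ φ (c t) v with hGdef
  have hG : ∀ t, HasDerivAt G (C * ‖v‖ ^ 2 - fderiv ℝ (fderiv ℝ φ) (c t) v v) t := by
    intro t
    have : HasDerivAt (fun t : ℝ => fderiv ℝ φ x v + C * ‖v‖ ^ 2 * t) (C * ‖v‖ ^ 2) t := by
      simpa using ((hasDerivAt_id t).const_mul (C * ‖v‖ ^ 2)).const_add (fderiv ℝ φ x v)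
    exact this.sub (hψ1 t)
  have hGmono : Monotone G := by
    apply monotone_of_deriv_nonneg (fun t => (hG t).differentiableAt)
    intro t
    rw [(hG t).deriv]
    have := h (c t) v
    linarith
  have hG0 : G 0 = 0 := by simp [hGdef, hc0]
  set H : ℝ → ℝ := fun t => φ x + t * fderiv ℝ φ x v + C / 2 * ‖v‖ ^ 2 * t ^ 2 - φ (c t)
    with hHdef
  have hH : ∀ t, HasDerivAt H (G t) t := by
    intro t
    have h1 : HasDerivAt (fun t : ℝ => t * fderiv ℝ φ x v) (fderiv ℝ φ x v) t := by
      simpa using (hasDerivAt_id t).mul_const (fderiv ℝ φ x v)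
    have h2 : HasDerivAt (fun t : ℝ => C / 2 * ‖v‖ ^ 2 * t ^ 2)
        (C / 2 * ‖v‖ ^ 2 * (2 * t)) t := by
      simpa using (hasDerivAt_pow 2 t).const_mul (C / 2 * ‖v‖ ^ 2)
    have := ((h1.const_add (φ x)).add h2).sub (hψ t)
    refine this.congr_deriv ?_
    simp [hGdef]
    ring
  have hHmono : MonotoneOn H (Icc (0:ℝ) 1) := by
    apply monotoneOn_of_deriv_nonneg (convex_Icc 0 1)
    · exact Continuous.continuousOn (by
        have : Differentiable ℝ H := fun t => (hH t).differentiableAt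
        exact this.continuous)
    · intro t _
      exact (hH t).differentiableAt.differentiableWithinAt
    · intro t ht
      rw [(hH t).deriv]
      have h0t : (0:ℝ) ≤ t := by
        rw [interior_Icc] at ht
        exact ht.1.le
      calc (0:ℝ) = G 0 := hG0.symm
        _ ≤ G t := hGmono h0t
  have hfin : H 0 ≤ H 1 := hHmono (by norm_num) (by norm_num) (by norm_num)
  have hc1 : c 1 = y := by simp [hcdef, hv]
  simp [hHdef, hc0, hc1] at hfin
  linarith

lemma aux_taylor_lower {n : ℕ} (φ : EuclideanSpace ℝ (Fin n) → ℝ) (hφ : ContDiff ℝ 2 φ) (μ : ℝ)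
    (h : ∀ z v : EuclideanSpace ℝ (Fin n), μ * ‖v‖ ^ 2 ≤ fderiv ℝ (fderiv ℝ φ) z v v)
    (x y : EuclideanSpace ℝ (Fin n)) :
    φ x + fderiv ℝ φ x (y - x) + μ / 2 * ‖y - x‖ ^ 2 ≤ φ y := by
  have hneg1 : (fderiv ℝ (fun z => -φ z)) = fun z => -(fderiv ℝ φ z) := by
    funext z
    exact fderiv_neg
  have hneg2 : ∀ z v : EuclideanSpace ℝ (Fin n),
      fderiv ℝ (fderiv ℝ (fun z => -φ z)) z v v = -(fderiv ℝ (fderiv ℝ φ) z v v) := by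
    intro z v
    rw [hneg1]
    have : (fderiv ℝ (fun z => -(fderiv ℝ φ z)) z) = -(fderiv ℝ (fderiv ℝ φ) z) := fderiv_neg
    rw [this]
    simp
  have := aux_taylor_upper (fun z => -φ z) hφ.neg (-μ)
    (by intro z v; rw [hneg2]; have := h z v; linarith) x y
  rw [hneg1] at this
  simp only [ContinuousLinearMap.neg_apply] at this
  linarith

/-- R-linear convergence of the fixed-steplength method to a noise neighborhood. -/
theorem fixed_step_R_linear_convergence
    (n : ℕ) (φ : EuclideanSpace ℝ (Fin n) → ℝ)
    (μ L : ℝ) (hμ : 0 < μ) (hμL : μ ≤ L)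
    (hφ : ContDiff ℝ 2 φ)
    (hHessLower : ∀ x v : EuclideanSpace ℝ (Fin n),
      μ * ‖v‖ ^ 2 ≤ (iteratedFDeriv ℝ 2 φ x) ![v, v])
    (hHessUpper : ∀ x v : EuclideanSpace ℝ (Fin n),
      (iteratedFDeriv ℝ 2 φ x) ![v, v] ≤ L * ‖v‖ ^ 2)
    (xstar : EuclideanSpace ℝ (Fin n)) (hmin : ∀ x, φ xstar ≤ φ x)
    (e : EuclideanSpace ℝ (Fin n) → EuclideanSpace ℝ (Fin n))
    (εg : ℝ) (hεg : 0 < εg) (he : ∀ x, ‖e x‖ ≤ εg)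
    (α : ℝ) (hα : 0 < α) (hαL : α ≤ 1 / L)
    (x g : ℕ → EuclideanSpace ℝ (Fin n))
    (hg : ∀ k, g k = gradient φ (x k) + e (x k))
    (hx : ∀ k, x (k + 1) = x k - α • g k) :
    ∀ k, φ (x k) - φ xstar ≤
      (1 - α * μ) ^ k * (φ (x 0) - φ xstar - εg ^ 2 / (2 * μ)) + εg ^ 2 / (2 * μ) := by
  have hL : 0 < L := lt_of_lt_of_le hμ hμL
  have hαL' : α * L ≤ 1 := by
    rw [le_div_iff₀ hL] at hαL
    linarith
  have hαμ : α * μ ≤ 1 := le_trans (by nlinarith) hαL'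
  have hf2u : ∀ z v : EuclideanSpace ℝ (Fin n),
      fderiv ℝ (fderiv ℝ φ) z v v ≤ L * ‖v‖ ^ 2 := by
    intro z v
    have := hHessUpper z v
    rwa [iteratedFDeriv_two_apply, show ![v, v] 0 = v from rfl,
      show ![v, v] 1 = v from rfl] at this
  have hf2l : ∀ z v : EuclideanSpace ℝ (Fin n),
      μ * ‖v‖ ^ 2 ≤ fderiv ℝ (fderiv ℝ φ) z v v := by
    intro z v
    have := hHessLower z v
    rwa [iteratedFDeriv_two_apply, show ![v, v] 0 = v from rfl,
      show ![v, v] 1 = v from rfl] at this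
  have hgrad : ∀ z w : EuclideanSpace ℝ (Fin n),
      ⟪gradient φ z, w⟫ = fderiv ℝ φ z w := by
    intro z w
    exact InnerProductSpace.toDual_symm_apply
  -- PL inequality
  have hPL : ∀ z, 2 * μ * (φ z - φ xstar) ≤ ‖gradient φ z‖ ^ 2 := by
    intro z
    have h1 := aux_taylor_lower φ hφ μ hf2l z xstar
    rw [← hgrad] at h1
    set Gz := gradient φ z
    set w := xstar - z
    have h2 : (0:ℝ) ≤ ‖μ • w + Gz‖ ^ 2 := sq_nonneg _
    rw [norm_add_sq_real] at h2
    have h3 : ⟪μ • w, Gz⟫ = μ * ⟪Gz, w⟫ := by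
      rw [real_inner_smul_left, real_inner_comm]
    have h4 : ‖μ • w‖ ^ 2 = μ ^ 2 * ‖w‖ ^ 2 := by
      rw [norm_smul, mul_pow, Real.norm_eq_abs, sq_abs]
    rw [h3, h4] at h2
    nlinarith [sq_nonneg ‖w‖]
  -- One-step descent
  have hstep : ∀ k, φ (x (k + 1)) - φ xstar ≤
      (1 - α * μ) * (φ (x k) - φ xstar) + α * εg ^ 2 / 2 := by
    intro k
    have h1 := aux_taylor_upper φ hφ L hf2u (x k) (x (k + 1))
    have hdiff : x (k + 1) - x k = (-α) • g k := by
      rw [hx k, neg_smul]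
      abel
    set Gk := gradient φ (x k) with hGk
    have hfd : fderiv ℝ φ (x k) (g k) = ‖Gk‖ ^ 2 + ⟪Gk, e (x k)⟫ := by
      rw [hg k, map_add, ← hgrad, ← hgrad, real_inner_self_eq_norm_sq]
    have hnorm : ‖(-α) • g k‖ ^ 2 = α ^ 2 * ‖g k‖ ^ 2 := by
      rw [norm_smul, mul_pow, Real.norm_eq_abs, abs_neg, sq_abs]
    rw [hdiff, map_smul, smul_eq_mul, hfd, hnorm] at h1
    have hgsq : ‖g k‖ ^ 2 = ‖Gk‖ ^ 2 + 2 * ⟪Gk, e (x k)⟫ + ‖e (x k)‖ ^ 2 := by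
      rw [hg k]
      exact norm_add_sq_real _ _
    have hε : ‖e (x k)‖ ^ 2 ≤ εg ^ 2 := by
      nlinarith [he (x k), norm_nonneg (e (x k))]
    have hPLk := hPL (x k)
    have hLα : L * α ^ 2 ≤ α := by nlinarith
    nlinarith [mul_nonneg (sub_nonneg.mpr hLα) (sq_nonneg ‖g k‖),
      mul_nonneg hα.le (sub_nonneg.mpr hPLk),
      mul_nonneg hα.le (sub_nonneg.mpr hε), sq_nonneg ‖g k‖, hgsq]
  -- Induction
  intro k
  induction k with
  | zero =>
    rw [pow_zero, one_mul]
    linarith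
  | succ k ih =>
    have h1 := hstep k
    have hr : (0:ℝ) ≤ 1 - α * μ := by linarith
    have h2 := mul_le_mul_of_nonneg_left ih hr
    have hc : α * εg ^ 2 / 2 = α * μ * (εg ^ 2 / (2 * μ)) := by
      field_simp
    rw [pow_succ]
    linarith [h1, h2]
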